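/- Let ρ be a root of a monic integer polynomial x^m + c₁x^{m-1} + ⋯ + c_m. Then for any integer a with N ∤ a, max_{1 ≤ n ≤ m} ‖ρ^{-n}·(a/N)‖ ≥ 1/(N·∑_{n=1}^m |c_n|), where ‖x‖ denotes the distance from x to the nearest integer. -/

import Mathlib

theorem stmt_10 (N : ℕ) (hN : 1 < N) (ρ : ℝ) (hρ : ρ ≠ 0)
    (m : ℕ) (hm : 1 ≤ m) (c : ℕ → ℤ)
    (hroot : ρ ^ m + ∑ n ∈ Finset.Icc 1 m, (c n : ℝ) * ρ ^ (m - n) = 0)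
    (hsum : 0 < ∑ n ∈ Finset.Icc 1 m, |c n|)
    (a : ℤ) (ha : ¬ (N : ℤ) ∣ a) :
    ∃ n ∈ Finset.Icc 1 m,
      (1 : ℝ) / (N * ∑ n ∈ Finset.Icc 1 m, |(c n : ℝ)|) ≤
        |(ρ ^ n)⁻¹ * ((a : ℝ) / N) - round ((ρ ^ n)⁻¹ * ((a : ℝ) / N))| := by
  by_contra hcon
  push_neg at hcon
  set S : ℝ := ∑ n ∈ Finset.Icc 1 m, |(c n : ℝ)| with hS
  have hSpos : 0 < S := by
    have h : (0:ℝ) < ((∑ n ∈ Finset.Icc 1 m, |c n| : ℤ) : ℝ) := by exact_mod_cast hsum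
    rw [hS]
    push_cast at h
    exact h
  have hNpos : (0:ℝ) < N := by positivity
  set x : ℕ → ℝ := fun n => (ρ ^ n)⁻¹ * ((a:ℝ)/N) with hx
  set e : ℕ → ℝ := fun n => x n - round (x n) with he
  have hpow : ∀ n ∈ Finset.Icc 1 m, ρ ^ (m - n) = ρ ^ m * (ρ ^ n)⁻¹ := by
    intro n hn
    rw [Finset.mem_Icc] at hn
    rw [eq_comm]
    field_simp
    rw [← pow_add]
    congr 1; omega
  have hkey : 1 + ∑ n ∈ Finset.Icc 1 m, (c n : ℝ) * (ρ ^ n)⁻¹ = 0 := by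
    have h1 : ρ ^ m * (1 + ∑ n ∈ Finset.Icc 1 m, (c n : ℝ) * (ρ ^ n)⁻¹) = 0 := by
      rw [mul_add, mul_one, Finset.mul_sum, ← hroot]
      congr 1
      apply Finset.sum_congr rfl
      intro n hn
      rw [hpow n hn]; ring
    rcases mul_eq_zero.1 h1 with h | h
    · exact absurd h (pow_ne_zero _ hρ)
    · exact h
  have hkey2 : (a:ℝ)/N + ∑ n ∈ Finset.Icc 1 m, (c n : ℝ) * x n = 0 := by
    have := congrArg (fun t => t * ((a:ℝ)/N)) hkey
    simp only [add_mul, one_mul, Finset.sum_mul, zero_mul] at this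
    convert this using 3 with n hn
    rw [hx]; ring
  set K : ℤ := ∑ n ∈ Finset.Icc 1 m, c n * round (x n) with hK
  have hsplit : ∑ n ∈ Finset.Icc 1 m, (c n : ℝ) * e n = -((a:ℝ) + N * K) / N := by
    have h1 : ∑ n ∈ Finset.Icc 1 m, (c n : ℝ) * e n
        = (∑ n ∈ Finset.Icc 1 m, (c n : ℝ) * x n) - (K : ℤ) := by
      rw [hK]
      push_cast
      rw [← Finset.sum_sub_distrib]
      apply Finset.sum_congr rfl
      intro n hn
      rw [he]; ring
    rw [h1]
    have h2 : ∑ n ∈ Finset.Icc 1 m, (c n : ℝ) * x n = -((a:ℝ)/N) := by linarith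
    rw [h2]
    field_simp
    ring
  -- lower bound
  have htne : a + N * K ≠ 0 := by
    intro h
    apply ha
    exact ⟨-K, by linarith⟩
  have hlow : (1:ℝ)/N ≤ |∑ n ∈ Finset.Icc 1 m, (c n : ℝ) * e n| := by
    rw [hsplit, abs_div, abs_neg, abs_of_pos hNpos]
    have h0 : (1:ℤ) ≤ |a + N * K| := by
      have := abs_pos.2 htne
      omega
    have h1 : (1:ℝ) ≤ |(a:ℝ) + N * K| := by
      calc (1:ℝ) ≤ ((|a + N * K| : ℤ) : ℝ) := by exact_mod_cast h0
        _ = |(a:ℝ) + N * K| := by push_cast; rfl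
    gcongr
  -- upper bound
  obtain ⟨n₀, hn₀, hcn₀⟩ : ∃ n₀ ∈ Finset.Icc 1 m, c n₀ ≠ 0 := by
    by_contra hall
    push_neg at hall
    rw [Finset.sum_eq_zero (fun n hn => by rw [hall n hn, abs_zero])] at hsum
    exact lt_irrefl 0 hsum
  have hup : |∑ n ∈ Finset.Icc 1 m, (c n : ℝ) * e n| < 1/N := by
    calc |∑ n ∈ Finset.Icc 1 m, (c n : ℝ) * e n|
        ≤ ∑ n ∈ Finset.Icc 1 m, |(c n : ℝ) * e n| := Finset.abs_sum_le_sum_abs _ _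
      _ = ∑ n ∈ Finset.Icc 1 m, |(c n : ℝ)| * |e n| := by
          apply Finset.sum_congr rfl; intro n _; rw [abs_mul]
      _ < ∑ n ∈ Finset.Icc 1 m, |(c n : ℝ)| * (1/(N*S)) := by
          apply Finset.sum_lt_sum
          · intro n hn
            exact mul_le_mul_of_nonneg_left (le_of_lt (hcon n hn)) (abs_nonneg _)
          · refine ⟨n₀, hn₀, ?_⟩
            apply mul_lt_mul_of_pos_left (hcon n₀ hn₀)
            simpa using hcn₀
      _ = S * (1/(N*S)) := by rw [← Finset.sum_mul]
      _ = 1/N := by field_simp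
  linarith
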